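/- Let p be a prime and n, k natural numbers. Then for any positive integer α, ord_p(k! · S(n,k)) ≥ ord_p(⌊n/p^(α-1)⌋!) − ⌊(n-k)/(p^(α-1)(p-1))⌋, where S(n,k) is the Stirling number of the second kind. -/

import Mathlib

open Nat

/-- Stirling numbers of the second kind: `stirling2 n k` is the number of
partitions of an `n`-element set into `k` nonempty blocks. -/
def stirling2 : ℕ → ℕ → ℕ
  | 0, 0 => 1
  | 0, _ + 1 => 0
  | _ + 1, 0 => 0
  | n + 1, k + 1 => (k + 1) * stirling2 n (k + 1) + stirling2 n k

lemma T_succ (n k : ℕ) : (k+1)! * stirling2 n (k+1)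
    = ∑ i ∈ Finset.range n, n.choose i * (k ! * stirling2 i k) := by
  induction n generalizing k with
  | zero => simp [stirling2]
  | succ n ih =>
    have hsplit : ∑ i ∈ Finset.range (n+1), (n+1).choose i * (k ! * stirling2 i k)
        = (∑ i ∈ Finset.range n, n.choose i * (k ! * stirling2 (i+1) k))
          + ((k+1)! * stirling2 n (k+1) + (k ! * stirling2 n k)) := by
      rw [Finset.sum_range_succ' (fun i => (n+1).choose i * (k ! * stirling2 i k)) n]
      have : ∀ i, (n+1).choose (i+1) * (k ! * stirling2 (i+1) k)
          = n.choose i * (k ! * stirling2 (i+1) k) + n.choose (i+1) * (k ! * stirling2 (i+1) k) := by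
        intro i; rw [Nat.choose_succ_succ, add_mul]
      rw [Finset.sum_congr rfl (fun i _ => this i), Finset.sum_add_distrib]
      have h2 : (∑ i ∈ Finset.range n, n.choose (i+1) * (k ! * stirling2 (i+1) k))
          + (n+1).choose 0 * (k ! * stirling2 0 k)
          = ∑ i ∈ Finset.range (n+1), n.choose i * (k ! * stirling2 i k) := by
        rw [Finset.sum_range_succ' (fun i => n.choose i * (k ! * stirling2 i k)) n]
        simp
      have h3 : ∑ i ∈ Finset.range (n+1), n.choose i * (k ! * stirling2 i k)
          = (k+1)! * stirling2 n (k+1) + n.choose n * (k ! * stirling2 n k) := by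
        rw [Finset.sum_range_succ, ih]
      simp only [Nat.choose_self, one_mul] at h3 ⊢
      omega
    rw [hsplit]
    cases k with
    | zero =>
      simp [stirling2, Nat.factorial]
    | succ k' =>
      have hexp : ∀ i, (k'+1)! * stirling2 (i+1) (k'+1)
          = (k'+1) * ((k'+1)! * stirling2 i (k'+1)) + (k'+1) * (k' ! * stirling2 i k') := by
        intro i
        show (k'+1)! * ((k'+1) * stirling2 i (k'+1) + stirling2 i k') = _
        rw [Nat.factorial_succ]
        ring
      have hsum : ∑ i ∈ Finset.range n, n.choose i * ((k'+1)! * stirling2 (i+1) (k'+1))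
          = (k'+1) * ((k'+2)! * stirling2 n (k'+2)) + (k'+1) * ((k'+1)! * stirling2 n (k'+1)) := by
        calc ∑ i ∈ Finset.range n, n.choose i * ((k'+1)! * stirling2 (i+1) (k'+1))
            = ∑ i ∈ Finset.range n, ((k'+1) * (n.choose i * ((k'+1)! * stirling2 i (k'+1)))
              + (k'+1) * (n.choose i * (k' ! * stirling2 i k'))) := by
              apply Finset.sum_congr rfl; intro i _; rw [hexp i]; ring
          _ = (k'+1) * (∑ i ∈ Finset.range n, n.choose i * ((k'+1)! * stirling2 i (k'+1)))
              + (k'+1) * (∑ i ∈ Finset.range n, n.choose i * (k' ! * stirling2 i k')) := by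
              rw [Finset.sum_add_distrib, Finset.mul_sum, Finset.mul_sum]
          _ = _ := by rw [← ih, ← ih]
      rw [hsum]
      show (k'+2)! * ((k'+2) * stirling2 n (k'+2) + stirling2 n (k'+1)) = _
      rw [Nat.factorial_succ (k'+1)]
      ring

section
variable {p : ℕ} [hp : Fact p.Prime]

-- Legendre with shifted index set
lemma legendre_div_pow {α b n : ℕ} (hα : 0 < α) (hb : α + n ≤ b) :
    padicValNat p ((n / p ^ (α - 1))!) = ∑ t ∈ Finset.Ico α b, n / p ^ t := by
  have hplt : 1 < p := hp.out.one_lt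
  have hlog : Nat.log p (n / p ^ (α - 1)) < b - (α - 1) := by
    have h1 : Nat.log p (n / p ^ (α - 1)) ≤ n := le_trans (Nat.log_le_self _ _)
      (Nat.div_le_self _ _)
    omega
  rw [padicValNat_factorial hlog]
  rw [Finset.sum_Ico_eq_sum_range, Finset.sum_Ico_eq_sum_range]
  have hlen : b - (α - 1) - 1 = b - α := by omega
  rw [hlen]
  apply Finset.sum_congr rfl
  intro i _
  rw [Nat.div_div_eq_div_mul, ← pow_add]
  congr 2
  omega

-- telescoping bound
lemma tele (j a b : ℕ) (ha : 0 < a) (hab : a ≤ b) :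
    (p - 1) * (∑ t ∈ Finset.Ico a b, j / p ^ t) + j / p ^ (b - 1) ≤ j / p ^ (a - 1) := by
  have hplt : 1 < p := hp.out.one_lt
  obtain ⟨q, rfl⟩ : ∃ q, p = q + 1 := ⟨p - 1, by omega⟩
  simp only [Nat.add_sub_cancel]
  induction b, hab using Nat.le_induction with
  | base => simp
  | succ b hab ih =>
    rw [Finset.sum_Ico_succ_top hab, Nat.mul_add]
    have h1 : (q + 1) ^ b = (q + 1) ^ (b - 1) * (q + 1) := by
      rw [← pow_succ]; congr 1; omega
    have h2 : j / (q + 1) ^ b = j / (q + 1) ^ (b - 1) / (q + 1) := by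
      rw [h1, Nat.div_div_eq_div_mul]
    have h3 : (j / (q + 1) ^ (b - 1) / (q + 1)) * (q + 1) ≤ j / (q + 1) ^ (b - 1) :=
      Nat.div_mul_le_self _ _
    have h4 : j / (q + 1) ^ (b + 1 - 1) = j / (q + 1) ^ b := by congr 1
    have h5 : (j / (q + 1) ^ (b - 1) / (q + 1)) * (q + 1)
        = q * (j / (q + 1) ^ (b - 1) / (q + 1)) + j / (q + 1) ^ (b - 1) / (q + 1) := by ring
    rw [h4, h2]
    linarith [ih]

-- main tail bound
lemma tail_lt {α : ℕ} (hα : 0 < α) (j b : ℕ) (hj : 0 < j) :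
    p ^ (α - 1) * (p - 1) * (∑ t ∈ Finset.Ico α b, j / p ^ t) < j := by
  have hplt : 1 < p := hp.out.one_lt
  set L := Nat.log p j with hL
  by_cases hsmall : j < p ^ α
  · have hz : ∀ t ∈ Finset.Ico α b, j / p ^ t = 0 := by
      intro t ht
      rw [Finset.mem_Ico] at ht
      exact Nat.div_eq_of_lt (lt_of_lt_of_le hsmall (Nat.pow_le_pow_right (by omega) ht.1))
    rw [Finset.sum_eq_zero hz]
    omega
  · push_neg at hsmall
    have hαL : α ≤ L := (Nat.le_log_iff_pow_le hplt (by omega)).mpr hsmall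
    have hbound : ∑ t ∈ Finset.Ico α b, j / p ^ t ≤ ∑ t ∈ Finset.Ico α (L + 1), j / p ^ t := by
      rcases le_or_gt b (L + 1) with hble | hble
      · exact Finset.sum_le_sum_of_subset (Finset.Ico_subset_Ico le_rfl hble)
      · rw [← Finset.sum_Ico_consecutive _ (by omega : α ≤ L + 1) (by omega : L + 1 ≤ b)]
        have : ∑ t ∈ Finset.Ico (L + 1) b, j / p ^ t = 0 := by
          apply Finset.sum_eq_zero
          intro t ht
          rw [Finset.mem_Ico] at ht
          apply Nat.div_eq_of_lt
          calc j < p ^ (L + 1) := Nat.lt_pow_succ_log_self hplt j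
            _ ≤ p ^ t := Nat.pow_le_pow_right (by omega) ht.1
        omega
    have htl := tele (p := p) j α (L + 1) hα (by omega)
    have hone : 1 ≤ j / p ^ (L + 1 - 1) := by
      rw [Nat.one_le_div_iff (by positivity)]
      have : L + 1 - 1 = L := by omega
      rw [this]
      exact Nat.pow_log_le_self p (by omega)
    have h4 : (p - 1) * (∑ t ∈ Finset.Ico α (L + 1), j / p ^ t) + 1 ≤ j / p ^ (α - 1) := by omega
    have h5 : p ^ (α - 1) * (j / p ^ (α - 1)) ≤ j := Nat.mul_div_le _ _ |>.trans_eq rfl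
    have h6 : 0 < p ^ (α - 1) := by positivity
    calc p ^ (α - 1) * (p - 1) * (∑ t ∈ Finset.Ico α b, j / p ^ t)
        ≤ p ^ (α - 1) * ((p - 1) * (∑ t ∈ Finset.Ico α (L + 1), j / p ^ t)) := by
          rw [mul_assoc]
          exact Nat.mul_le_mul_left _ (Nat.mul_le_mul_left _ hbound)
      _ < j := by nlinarith

-- key natural number inequality (★★ rearranged without subtraction)
lemma star2 {α : ℕ} (hα : 0 < α) {i n : ℕ} (hin : i < n) :
    p ^ (α - 1) * (p - 1) * padicValNat p ((n / p ^ (α - 1))!) + i + 1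
      ≤ p ^ (α - 1) * (p - 1) *
        (padicValNat p (n.choose i) + padicValNat p ((i / p ^ (α - 1))!)) + n := by
  have hplt : 1 < p := hp.out.one_lt
  set b := α + n with hb
  have hlogn : Nat.log p n < b := by
    have := Nat.log_le_self p n; omega
  -- factorial valuation additivity
  have hfact : padicValNat p (n !) = padicValNat p (n.choose i)
      + (padicValNat p (i !) + padicValNat p ((n - i)!)) := by
    have h := Nat.choose_mul_factorial_mul_factorial hin.le
    calc padicValNat p (n !) = padicValNat p (n.choose i * i ! * (n - i)!) := by rw [h]
      _ = _ := by
          rw [padicValNat.mul (Nat.mul_ne_zero (Nat.choose_pos hin.le).ne' (factorial_ne_zero _)) (factorial_ne_zero _),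
            padicValNat.mul (Nat.choose_pos hin.le).ne' (factorial_ne_zero _), add_assoc]
  have hLn : padicValNat p (n !) = ∑ t ∈ Finset.Ico 1 b, n / p ^ t :=
    padicValNat_factorial hlogn
  have hLi : padicValNat p (i !) = ∑ t ∈ Finset.Ico 1 b, i / p ^ t :=
    padicValNat_factorial (lt_of_le_of_lt (Nat.log_mono_right hin.le) hlogn)
  have hLj : padicValNat p ((n - i)!) = ∑ t ∈ Finset.Ico 1 b, (n - i) / p ^ t :=
    padicValNat_factorial (lt_of_le_of_lt (Nat.log_mono_right (Nat.sub_le _ _)) hlogn)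
  have hsub : Finset.Ico α b ⊆ Finset.Ico 1 b := Finset.Ico_subset_Ico hα (le_refl _)
  -- subset inequality
  have hkey : ∑ t ∈ Finset.Ico α b, n / p ^ t ≤ padicValNat p (n.choose i)
      + (∑ t ∈ Finset.Ico α b, i / p ^ t) + (∑ t ∈ Finset.Ico α b, (n - i) / p ^ t) := by
    have hdecomp : ∀ f : ℕ → ℕ, ∑ t ∈ Finset.Ico 1 b \ Finset.Ico α b, f t
        + ∑ t ∈ Finset.Ico α b, f t = ∑ t ∈ Finset.Ico 1 b, f t :=
      fun f => Finset.sum_sdiff hsub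
    have hptw : ∑ t ∈ Finset.Ico 1 b \ Finset.Ico α b, (i / p ^ t + (n - i) / p ^ t)
        ≤ ∑ t ∈ Finset.Ico 1 b \ Finset.Ico α b, n / p ^ t := by
      apply Finset.sum_le_sum
      intro t _
      calc i / p ^ t + (n - i) / p ^ t ≤ (i + (n - i)) / p ^ t :=
            Nat.add_div_le_add_div _ _ _
        _ = n / p ^ t := by congr 1; omega
    have e1 := hdecomp (fun t => n / p ^ t)
    have e2 := hdecomp (fun t => i / p ^ t)
    have e3 := hdecomp (fun t => (n - i) / p ^ t)
    have e4 := Finset.sum_add_distrib (s := Finset.Ico 1 b \ Finset.Ico α b)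
      (f := fun t => i / p ^ t) (g := fun t => (n - i) / p ^ t)
    rw [e4] at hptw
    omega
  have htail := tail_lt (p := p) hα (n - i) b (by omega)
  rw [legendre_div_pow hα (le_refl b), legendre_div_pow hα (by omega : α + i ≤ b)]
  have hmul := Nat.mul_le_mul_left (p ^ (α - 1) * (p - 1)) hkey
  rw [Nat.mul_add, Nat.mul_add] at hmul
  rw [Nat.mul_add]
  omega


lemma star_int {α : ℕ} (hα : 0 < α) {i n k : ℕ} (hin : i < n) :
    ((padicValNat p ((n / p ^ (α - 1))!) : ℤ) -
        ((n : ℤ) - ((k + 1 : ℕ) : ℤ)).fdiv ((p : ℤ) ^ (α - 1) * ((p : ℤ) - 1))).toNat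
      ≤ padicValNat p (n.choose i) +
        ((padicValNat p ((i / p ^ (α - 1))!) : ℤ) -
          ((i : ℤ) - (k : ℤ)).fdiv ((p : ℤ) ^ (α - 1) * ((p : ℤ) - 1))).toNat := by
  have hplt : 1 < p := hp.out.one_lt
  have hp1 : (1 : ℤ) < (p : ℤ) := by exact_mod_cast hplt
  set D : ℤ := (p : ℤ) ^ (α - 1) * ((p : ℤ) - 1) with hDdef
  have hD : 0 < D := by
    apply mul_pos (pow_pos (by linarith) _); linarith
  set νn := padicValNat p ((n / p ^ (α - 1))!) with hνn
  set νc := padicValNat p (n.choose i) with hνc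
  set νi := padicValNat p ((i / p ^ (α - 1))!) with hνi
  have hself : ((νi : ℤ) - ((i : ℤ) - (k : ℤ)) / D)
      ≤ (((νi : ℤ) - ((i : ℤ) - (k : ℤ)) / D).toNat : ℤ) := Int.self_le_toNat _
  have hfd1 : ((n : ℤ) - ((k + 1 : ℕ) : ℤ)).fdiv D = ((n : ℤ) - ((k + 1 : ℕ) : ℤ)) / D :=
    Int.fdiv_eq_ediv_of_nonneg _ hD.le
  have hfd2 : ((i : ℤ) - (k : ℤ)).fdiv D = ((i : ℤ) - (k : ℤ)) / D :=
    Int.fdiv_eq_ediv_of_nonneg _ hD.le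
  have hcast : ((p ^ (α - 1) * (p - 1) : ℕ) : ℤ) = D := by
    push_cast [Nat.cast_sub hplt.le]; rfl
  rw [Int.toNat_le, hfd1, hfd2]
  have hc := star2 (p := p) hα hin
  have hc' := (Nat.cast_le (α := ℤ)).mpr hc
  simp only [Nat.cast_add, Nat.cast_mul, Nat.cast_one, hcast] at hc'
  have key : ((νn : ℤ) - νc - νi + ((i : ℤ) - (k : ℤ)) / D) ≤ ((n : ℤ) - ((k + 1 : ℕ) : ℤ)) / D := by
    rw [Int.le_ediv_iff_mul_le hD]
    have h2 : (((i : ℤ) - (k : ℤ)) / D) * D ≤ (i : ℤ) - (k : ℤ) := Int.ediv_mul_le _ hD.ne'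
    push_cast
    nlinarith [hc', h2]
  push_cast at key ⊢
  linarith [hself]

lemma main_dvd {α : ℕ} (hα : 0 < α) (k n : ℕ) :
    p ^ (((padicValNat p ((n / p ^ (α - 1))!) : ℤ) -
        ((n : ℤ) - (k : ℤ)).fdiv ((p : ℤ) ^ (α - 1) * ((p : ℤ) - 1))).toNat) ∣
      k ! * stirling2 n k := by
  induction k generalizing n with
  | zero =>
    cases n with
    | zero =>
      simp [stirling2, Nat.factorial]
    | succ m =>
      simp [stirling2]
  | succ k ih =>
    rw [T_succ n k]
    apply Finset.dvd_sum
    intro i hi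
    have hi' : i < n := Finset.mem_range.mp hi
    have h3 := star_int (p := p) hα (k := k) hi'
    calc p ^ (((padicValNat p ((n / p ^ (α - 1))!) : ℤ) -
          ((n : ℤ) - ((k + 1 : ℕ) : ℤ)).fdiv ((p : ℤ) ^ (α - 1) * ((p : ℤ) - 1))).toNat)
        ∣ p ^ (padicValNat p (n.choose i) +
          (((padicValNat p ((i / p ^ (α - 1))!) : ℤ) -
            ((i : ℤ) - (k : ℤ)).fdiv ((p : ℤ) ^ (α - 1) * ((p : ℤ) - 1))).toNat)) :=
          pow_dvd_pow _ h3
      _ ∣ n.choose i * (k ! * stirling2 i k) := by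
          rw [pow_add]
          exact mul_dvd_mul pow_padicValNat_dvd (ih i)

end

/-- For a prime `p`, naturals `n, k` and a positive integer `α`,
`ord_p(k! · S(n,k)) ≥ ord_p(⌊n/p^(α-1)⌋!) − ⌊(n-k)/(p^(α-1)(p-1))⌋`,
stated as a divisibility (which is trivially true when the right side is negative). -/
theorem ord_factorial_mul_stirling2 (p : ℕ) (hp : p.Prime) (n k α : ℕ) (hα : 0 < α) :
    p ^ (((padicValNat p ((n / p ^ (α - 1))!) : ℤ) -
        ((n : ℤ) - (k : ℤ)).fdiv ((p : ℤ) ^ (α - 1) * ((p : ℤ) - 1))).toNat) ∣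
      k ! * stirling2 n k := by
  haveI : Fact p.Prime := ⟨hp⟩
  exact main_dvd hα k n
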